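/- Let t ↦ (X(t), y(t)) be a differentiable trajectory of the gradient descent-ascent dynamics, and let (x*, y*) be an interior Nash equilibrium with value u*. Define H₂(X; δ) = δᵀ U Xᵀ δ for a zero-sum vector δ ∈ ℝ^{m_X}. Then at every time t and for every zero-sum δ, d/dt H₂(X(t); δ) = (δᵀ U dy)², where dy = y(t) − y*; in particular d/dt H₂(X(t); δ) ≥ 0. -/

import Mathlib

/-- Along a differentiable trajectory of the gradient descent-ascent
dynamics with an interior Nash equilibrium `(x*, y*)` of value `u*`, for every zero-sum
vector `δ ∈ ℝ^{m_X}`, the time derivative of `H₂(X; δ) = δᵀ U Xᵀ δ` equals `(δᵀ U dy)²`,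
where `dy = y(t) − y*`; in particular it is nonnegative. -/
theorem stmt_17 (mX mY : ℕ) (U : Fin mX → Fin mY → ℝ)
    (X : ℝ → Fin mX → Fin mY → ℝ) (Y : ℝ → Fin mY → ℝ)
    (hXpos : ∀ t i j, 0 < X t i j) (hYpos : ∀ t j, 0 < Y t j)
    (hXsum : ∀ t j, ∑ i : Fin mX, X t i j = 1) (hYsum : ∀ t, ∑ j : Fin mY, Y t j = 1)
    -- gradient descent-ascent dynamics of X
    (hX : ∀ t i j, HasDerivAt (fun s => X s i j)
      ((Y t j * ∑ j' : Fin mY, U i j' * Y t j') -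
        (1 / (mX : ℝ)) * ∑ i' : Fin mX, Y t j * ∑ j' : Fin mY, U i' j' * Y t j') t)
    -- gradient descent-ascent dynamics of Y
    (hY : ∀ t j, HasDerivAt (fun s => Y s j)
      (-(((∑ i : Fin mX, U i j * (∑ j' : Fin mY, X t i j' * Y t j')) +
          ∑ i : Fin mX, X t i j * ∑ j' : Fin mY, U i j' * Y t j') -
        (1 / (mY : ℝ)) * ∑ j₂ : Fin mY,
          ((∑ i : Fin mX, U i j₂ * (∑ j' : Fin mY, X t i j' * Y t j')) +
            ∑ i : Fin mX, X t i j₂ * ∑ j' : Fin mY, U i j' * Y t j'))) t)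
    -- interior Nash equilibrium (x*, y*) with value u*
    (xs : Fin mX → ℝ) (ys : Fin mY → ℝ) (ustar : ℝ)
    (hxspos : ∀ i, 0 < xs i) (hxssum : ∑ i : Fin mX, xs i = 1)
    (hyspos : ∀ j, 0 < ys j) (hyssum : ∑ j : Fin mY, ys j = 1)
    (hNx : ∀ j, ∑ i : Fin mX, U i j * xs i = ustar)
    (hNy : ∀ i, ∑ j : Fin mY, U i j * ys j = ustar)
    (t : ℝ) (δ : Fin mX → ℝ) (hδ : ∑ i : Fin mX, δ i = 0) :
    HasDerivAt
      (fun s => ∑ i : Fin mX, ∑ i' : Fin mX, ∑ j : Fin mY,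
        δ i * U i j * X s i' j * δ i')
      ((∑ i : Fin mX, ∑ j : Fin mY, δ i * U i j * (Y t j - ys j))^2) t ∧
    0 ≤ (∑ i : Fin mX, ∑ j : Fin mY, δ i * U i j * (Y t j - ys j))^2 := by

  refine ⟨?_, sq_nonneg _⟩
  set D : Fin mX → Fin mY → ℝ := fun i j =>
    (Y t j * ∑ j' : Fin mY, U i j' * Y t j') -
      (1 / (mX : ℝ)) * ∑ i' : Fin mX, Y t j * ∑ j' : Fin mY, U i' j' * Y t j' with hD
  have hderiv : HasDerivAt
      (fun s => ∑ i : Fin mX, ∑ i' : Fin mX, ∑ j : Fin mY,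
        δ i * U i j * X s i' j * δ i')
      (∑ i : Fin mX, ∑ i' : Fin mX, ∑ j : Fin mY,
        δ i * U i j * D i' j * δ i') t := by
    refine HasDerivAt.fun_sum fun i _ => HasDerivAt.fun_sum fun i' _ => HasDerivAt.fun_sum fun j _ => ?_
    have h := ((hX t i' j).const_mul (δ i * U i j)).mul_const (δ i')
    convert h using 1 <;> ring_nf <;> rfl
  have hzero : ∀ i, ∑ j : Fin mY, δ i * U i j * ys j = δ i * ustar := by
    intro i
    rw [show ∑ j : Fin mY, δ i * U i j * ys j = δ i * ∑ j : Fin mY, U i j * ys j by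
      rw [Finset.mul_sum]; exact Finset.sum_congr rfl fun j _ => by ring, hNy i]
  have hys : ∑ i : Fin mX, ∑ j : Fin mY, δ i * U i j * ys j = 0 := by
    rw [Finset.sum_congr rfl fun i _ => hzero i, ← Finset.sum_mul, hδ, zero_mul]
  set B : ℝ := ∑ i : Fin mX, ∑ j : Fin mY, δ i * U i j * Y t j with hB
  have hRHS : (∑ i : Fin mX, ∑ j : Fin mY, δ i * U i j * (Y t j - ys j))^2 = B^2 := by
    congr 1
    have : ∀ i : Fin mX, ∀ j : Fin mY, δ i * U i j * (Y t j - ys j)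
        = δ i * U i j * Y t j - δ i * U i j * ys j := fun i j => by ring
    simp only [this, Finset.sum_sub_distrib, hys, sub_zero, hB]
  rw [hRHS]
  convert hderiv using 1
  have hsplit : ∀ i, ∑ i' : Fin mX, ∑ j : Fin mY, δ i * U i j * D i' j * δ i'
      = (∑ j : Fin mY, δ i * U i j * Y t j) * B := by
    intro i
    have hA : ∀ i' : Fin mX, ∑ j : Fin mY, δ i * U i j * D i' j * δ i'
        = (∑ j : Fin mY, δ i * U i j * Y t j) * (δ i' * ∑ j' : Fin mY, U i' j' * Y t j')
          - (∑ j : Fin mY, δ i * U i j *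
              ((1 / (mX : ℝ)) * ∑ i'' : Fin mX, Y t j * ∑ j' : Fin mY, U i'' j' * Y t j')) * δ i' := by
      intro i'
      rw [Finset.sum_mul, Finset.sum_mul, ← Finset.sum_sub_distrib]
      refine Finset.sum_congr rfl fun j _ => ?_
      simp only [hD]
      ring
    rw [Finset.sum_congr rfl fun i' _ => hA i', Finset.sum_sub_distrib]
    have h2 : ∑ i' : Fin mX, (∑ j : Fin mY, δ i * U i j *
        ((1 / (mX : ℝ)) * ∑ i'' : Fin mX, Y t j * ∑ j' : Fin mY, U i'' j' * Y t j')) * δ i' = 0 := by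
      rw [← Finset.mul_sum, hδ, mul_zero]
    rw [h2, sub_zero, ← Finset.mul_sum]
    congr 1
    rw [hB]
    refine Finset.sum_congr rfl fun i' _ => ?_
    rw [Finset.mul_sum]
    exact Finset.sum_congr rfl fun j' _ => by ring
  rw [Finset.sum_congr rfl fun i _ => hsplit i, ← Finset.sum_mul, ← hB, sq]
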